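/- Let α, α' be irrational and q, q' nonzero integers. If αℤ + (1/q)ℤ = r(α'ℤ + (1/q')ℤ) for some positive real r, then there is a matrix ((a,b),(c,d)) ∈ GL₂(ℤ) with qα = (a q'α' + b)/(c q'α' + d). -/

import Mathlib

private lemma int_lin_zero {β : ℝ} (hβ : Irrational β) (m n : ℤ)
    (h : (m : ℝ) * β + n = 0) : m = 0 ∧ n = 0 := by
  by_cases hm : m = 0
  · subst hm; simp at h; exact ⟨rfl, by exact_mod_cast h⟩
  · exfalso
    have hβq : β = ((-n : ℚ) / (m : ℚ) : ℚ) := by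
      have hm' : (m : ℝ) ≠ 0 := Int.cast_ne_zero.mpr hm
      push_cast
      field_simp
      linarith
    exact (hβq ▸ hβ) ⟨_, rfl⟩

private lemma mem_extract {x y z : ℝ} (h : z ∈ AddSubgroup.closure ({x, y} : Set ℝ)) :
    ∃ m n : ℤ, z = m * x + n * y := by
  obtain ⟨m, n, hmn⟩ := AddSubgroup.mem_closure_pair.mp h
  exact ⟨m, n, by rw [← hmn]; simp [zsmul_eq_mul]⟩

theorem stmt7 (α α' : ℝ) (hα : Irrational α) (hα' : Irrational α')
    (q q' : ℤ) (hq : q ≠ 0) (hq' : q' ≠ 0) (r : ℝ) (hr : 0 < r)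
    (heq : (AddSubgroup.closure {α, 1 / (q : ℝ)} : Set ℝ) =
      (fun x => r * x) '' (AddSubgroup.closure {α', 1 / (q' : ℝ)} : Set ℝ)) :
    ∃ A : GL (Fin 2) ℤ,
      ((A : Matrix (Fin 2) (Fin 2) ℤ) 1 0 : ℝ) * ((q' : ℝ) * α') + ((A : Matrix (Fin 2) (Fin 2) ℤ) 1 1 : ℝ) ≠ 0 ∧
      (q : ℝ) * α =
        (((A : Matrix (Fin 2) (Fin 2) ℤ) 0 0 : ℝ) * ((q' : ℝ) * α') + ((A : Matrix (Fin 2) (Fin 2) ℤ) 0 1 : ℝ)) /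
        (((A : Matrix (Fin 2) (Fin 2) ℤ) 1 0 : ℝ) * ((q' : ℝ) * α') + ((A : Matrix (Fin 2) (Fin 2) ℤ) 1 1 : ℝ)) := by
  have hqR : (q : ℝ) ≠ 0 := Int.cast_ne_zero.mpr hq
  have hq'R : (q' : ℝ) ≠ 0 := Int.cast_ne_zero.mpr hq'
  set β : ℝ := (q : ℝ) * α with hβdef
  set β' : ℝ := (q' : ℝ) * α' with hβ'def
  have hβ : Irrational β := hα.intCast_mul hq
  set u : ℝ := (q : ℝ) * r / (q' : ℝ) with hudef
  -- extract membership facts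
  have hmemα : α ∈ (AddSubgroup.closure ({α, 1 / (q : ℝ)} : Set ℝ) : Set ℝ) :=
    AddSubgroup.subset_closure (by simp)
  have hmemq : 1 / (q : ℝ) ∈ (AddSubgroup.closure ({α, 1 / (q : ℝ)} : Set ℝ) : Set ℝ) :=
    AddSubgroup.subset_closure (by simp)
  rw [heq] at hmemα hmemq
  obtain ⟨w₁, hw₁, hw₁e⟩ := hmemα
  obtain ⟨w₂, hw₂, hw₂e⟩ := hmemq
  obtain ⟨a, b, hab⟩ := mem_extract hw₁
  obtain ⟨c, d, hcd⟩ := mem_extract hw₂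
  -- β = u * (a * β' + b)
  have h1 : β = u * ((a : ℝ) * β' + b) := by
    have : α = r * ((a : ℝ) * α' + b * (1 / (q' : ℝ))) := by rw [← hab]; exact hw₁e.symm
    rw [hβdef, hβ'def, hudef, this]; field_simp
  -- 1 = u * (c * β' + d)
  have h2 : (1 : ℝ) = u * ((c : ℝ) * β' + d) := by
    have : 1 / (q : ℝ) = r * ((c : ℝ) * α' + d * (1 / (q' : ℝ))) := by rw [← hcd]; exact hw₂e.symm
    have h2' := congrArg (fun x => (q : ℝ) * x) this
    rw [hβ'def, hudef]
    rw [mul_one_div, div_self hqR] at h2'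
    rw [h2']; field_simp
  -- reverse direction
  have hmemα' : r * α' ∈ (AddSubgroup.closure ({α, 1 / (q : ℝ)} : Set ℝ) : Set ℝ) := by
    rw [heq]; exact ⟨α', AddSubgroup.subset_closure (by simp), rfl⟩
  have hmemq' : r * (1 / (q' : ℝ)) ∈ (AddSubgroup.closure ({α, 1 / (q : ℝ)} : Set ℝ) : Set ℝ) := by
    rw [heq]; exact ⟨1 / (q' : ℝ), AddSubgroup.subset_closure (by simp), rfl⟩
  obtain ⟨e, f, hef⟩ := mem_extract hmemα'
  obtain ⟨g, h, hgh⟩ := mem_extract hmemq'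
  -- u * β' = e * β + f
  have h3 : u * β' = (e : ℝ) * β + f := by
    rw [hudef, hβ'def, hβdef]
    have h' : (q : ℝ) * r / (q' : ℝ) * ((q' : ℝ) * α') = (q : ℝ) * (r * α') := by
      field_simp
    rw [h', hef]; field_simp
  -- u = g * β + h
  have h4 : u = (g : ℝ) * β + h := by
    rw [hudef, hβdef]
    have h' : (q : ℝ) * r / (q' : ℝ) = (q : ℝ) * (r * (1 / (q' : ℝ))) := by
      field_simp
    rw [h', hgh]; field_simp
  -- combine
  have key1 : β = ((a * e + b * g : ℤ) : ℝ) * β + ((a * f + b * h : ℤ) : ℝ) := by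
    push_cast
    calc β = (a : ℝ) * (u * β') + (b : ℝ) * u := by rw [h1]; ring
    _ = _ := by rw [h3, h4]; ring
  have key2 : (1 : ℝ) = ((c * e + d * g : ℤ) : ℝ) * β + ((c * f + d * h : ℤ) : ℝ) := by
    push_cast
    calc (1 : ℝ) = (c : ℝ) * (u * β') + (d : ℝ) * u := by rw [h2]; ring
    _ = _ := by rw [h3, h4]; ring
  have e1 : a * e + b * g = 1 ∧ a * f + b * h = 0 := by
    have := int_lin_zero hβ (a * e + b * g - 1) (a * f + b * h) (by push_cast; push_cast at key1; linarith)
    omega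
  have e2 : c * e + d * g = 0 ∧ c * f + d * h = 1 := by
    have := int_lin_zero hβ (c * e + d * g) (c * f + d * h - 1) (by push_cast; push_cast at key2; linarith)
    omega
  -- build the matrix
  set M : Matrix (Fin 2) (Fin 2) ℤ := !![a, b; c, d] with hM
  set N : Matrix (Fin 2) (Fin 2) ℤ := !![e, f; g, h] with hN
  have hMN : M * N = 1 := by
    ext i j
    fin_cases i <;> fin_cases j <;>
      simp [hM, hN, Matrix.mul_apply, Fin.sum_univ_two] <;> omega
  have hNM : N * M = 1 := mul_eq_one_comm.mp hMN
  refine ⟨⟨M, N, hMN, hNM⟩, ?_, ?_⟩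
  · show (c : ℝ) * β' + (d : ℝ) ≠ 0
    intro h0
    rw [h0, mul_zero] at h2
    exact one_ne_zero h2
  · show β = ((a : ℝ) * β' + b) / ((c : ℝ) * β' + d)
    have hden : (c : ℝ) * β' + (d : ℝ) ≠ 0 := by
      intro h0; rw [h0, mul_zero] at h2; exact one_ne_zero h2
    rw [h1, eq_div_iff hden]
    have : u * ((c : ℝ) * β' + d) = 1 := h2.symm
    calc u * ((a:ℝ) * β' + b) * ((c:ℝ) * β' + d)
        = ((a:ℝ) * β' + b) * (u * ((c:ℝ) * β' + d)) := by ring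
      _ = _ := by rw [this, mul_one]
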